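/- Let δ > 0, let α, ε, M be real numbers with 0 ≤ α ≤ 1/4, 0 ≤ ε ≤ δ²/16, and M ≥ 0, let T be a real number with 0 < T ≤ 2/δ, and let f : [0, T] → ℝ be twice continuously differentiable with f(0) ≥ 1 − α, |f''(x)| ≤ ε, and |f'(x)| ≤ M for all x ∈ [0, T]. Then for every s ∈ [0, T] with f'(s) > 0 one has f(s) ≥ 1/2. Consequently, if in addition f(s) > 0 for all s ∈ [0, T], then max(f'(s), 0) ≤ 2·M·f(s) for every s ∈ [0, T]. -/

import Mathlib

/-- If `f` is twice continuously differentiable on `[0,T]` with `f(0) ≥ 1 − α`,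
`|f''| ≤ ε`, `|f'| ≤ M`, where `0 ≤ α ≤ 1/4`, `0 ≤ ε ≤ δ²/16`, `M ≥ 0` and `0 < T ≤ 2/δ`,
then `f'(s) > 0` forces `f(s) ≥ 1/2`; consequently, if moreover `f > 0` on `[0,T]`, then
`max(f'(s), 0) ≤ 2·M·f(s)` on `[0,T]`. -/
theorem positive_part_slope_ratio_bound
    (δ α ε M T : ℝ) (hδ : 0 < δ) (hα0 : 0 ≤ α) (hα : α ≤ 1 / 4)
    (hε0 : 0 ≤ ε) (hε : ε ≤ δ ^ 2 / 16) (hM : 0 ≤ M) (hT0 : 0 < T) (hT : T ≤ 2 / δ)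
    (f f' f'' : ℝ → ℝ)
    (hf : ∀ x ∈ Set.Icc (0:ℝ) T, HasDerivWithinAt f (f' x) (Set.Icc 0 T) x)
    (hf' : ∀ x ∈ Set.Icc (0:ℝ) T, HasDerivWithinAt f' (f'' x) (Set.Icc 0 T) x)
    (hf''cont : ContinuousOn f'' (Set.Icc 0 T))
    (h0 : 1 - α ≤ f 0)
    (hbd : ∀ x ∈ Set.Icc (0:ℝ) T, |f'' x| ≤ ε)
    (hbd' : ∀ x ∈ Set.Icc (0:ℝ) T, |f' x| ≤ M) :
    (∀ s ∈ Set.Icc (0:ℝ) T, 0 < f' s → 1 / 2 ≤ f s) ∧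
      ((∀ s ∈ Set.Icc (0:ℝ) T, 0 < f s) →
        ∀ s ∈ Set.Icc (0:ℝ) T, max (f' s) 0 ≤ 2 * M * f s) := by
  -- Lipschitz bound on f'
  have hlip : ∀ x ∈ Set.Icc (0:ℝ) T, ∀ y ∈ Set.Icc (0:ℝ) T, |f' y - f' x| ≤ ε * |y - x| := by
    intro x hx y hy
    have := (convex_Icc (0:ℝ) T).norm_image_sub_le_of_norm_hasDerivWithin_le hf'
      (fun z hz => by simpa using hbd z hz) hx hy
    simpa using this
  have key : ∀ s ∈ Set.Icc (0:ℝ) T, 0 < f' s → 1 / 2 ≤ f s := by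
    intro s hs hpos
    obtain ⟨hs0, hsT⟩ := hs
    set φ : ℝ → ℝ := fun x => f x - f' s * x - ε / 2 * (s - x) ^ 2 with hφ
    have hsub : Set.Icc (0:ℝ) s ⊆ Set.Icc 0 T := Set.Icc_subset_Icc le_rfl hsT
    have hsub' : interior (Set.Icc (0:ℝ) s) ⊆ Set.Icc 0 T := interior_subset.trans hsub
    have hderiv : ∀ x ∈ interior (Set.Icc (0:ℝ) s),
        HasDerivWithinAt φ (f' x - f' s + ε * (s - x)) (interior (Set.Icc (0:ℝ) s)) x := by
      intro x hx
      have h1 : HasDerivWithinAt f (f' x) (interior (Set.Icc (0:ℝ) s)) x :=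
        (hf x (hsub' hx)).mono hsub'
      have h2 : HasDerivAt (fun x => f' s * x + ε / 2 * (s - x) ^ 2)
          (f' s - ε * (s - x)) x := by
        have h := ((hasDerivAt_id x).const_mul (f' s)).add
          ((((hasDerivAt_const x s).sub (hasDerivAt_id x)).pow 2).const_mul (ε / 2))
        convert h using 1
        · rfl
        · rfl
        · ext y; simp
        push_cast
        simp
        ring
      have h3 := h1.sub h2.hasDerivWithinAt
      convert h3 using 1
      · rfl
      · rfl
      · ext y; simp [hφ]; ring
      · ring
    have hcontf : ContinuousOn f (Set.Icc 0 T) := fun x hx => (hf x hx).continuousWithinAt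
    have hcontφ : ContinuousOn φ (Set.Icc 0 s) :=
      ((hcontf.mono hsub).sub (continuousOn_const.mul continuousOn_id)).sub
        (continuousOn_const.mul (((continuousOn_const.sub continuousOn_id).pow 2)))
    have hmono : MonotoneOn φ (Set.Icc 0 s) := by
      apply monotoneOn_of_hasDerivWithinAt_nonneg (convex_Icc 0 s) hcontφ hderiv
      intro x hx
      rw [interior_Icc] at hx
      have hxT : x ∈ Set.Icc (0:ℝ) T := ⟨hx.1.le, hx.2.le.trans hsT⟩
      have := hlip x hxT s ⟨hs0, hsT⟩
      have habs : |s - x| = s - x := abs_of_nonneg (by linarith [hx.2])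
      rw [habs] at this
      have := (abs_le.mp this).2
      linarith
    have h01 : φ 0 ≤ φ s := hmono ⟨le_rfl, hs0⟩ ⟨hs0, le_rfl⟩ hs0
    simp only [hφ] at h01
    -- φ 0 = f 0 - ε/2 * s^2, φ s = f s - f' s * s
    have hε2 : ε * s ^ 2 ≤ 1 / 4 := by
      have hds : δ * s ≤ 2 := by
        have : s ≤ 2 / δ := hsT.trans hT
        calc δ * s ≤ δ * (2 / δ) := by nlinarith
        _ = 2 := by field_simp
      nlinarith [mul_nonneg hδ.le hs0, sq_nonneg s, mul_le_mul_of_nonneg_right hε (sq_nonneg s)]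
    nlinarith [mul_nonneg hpos.le hs0]
  refine ⟨key, fun hposf s hs => ?_⟩
  rcases le_or_gt (f' s) 0 with h | h
  · rw [max_eq_right h]
    exact mul_nonneg (by linarith) (hposf s hs).le
  · rw [max_eq_left h.le]
    have h1 := key s hs h
    have h2 := (abs_le.mp (hbd' s hs)).1
    have h3 := (abs_le.mp (hbd' s hs)).2
    nlinarith
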